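/- Let C₁, C₃, C₅ be three pairwise distinct circles in ℂ with centers c₁, c₃, c₅ and radii r₁, r₃, r₅ > 0, all passing through a common point w₀. Let w₂ ∈ C₁ ∩ C₃ with w₂ ≠ w₀, w₄ ∈ C₃ ∩ C₅ with w₄ ≠ w₀, and w₆ ∈ C₅ ∩ C₁ with w₆ ≠ w₀. Let P ∈ ℂ with P ≠ c₁, P ≠ c₃, P ≠ c₅, and let w₁, w₃, w₅ be the inversions of P in C₁, C₃, C₅ respectively. Assume w₂ ≠ w₃, w₄ ≠ w₅ and w₆ ≠ w₁. Then M(w₁,w₂,w₃,w₄,w₅,w₆) = −1. -/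

import Mathlib

set_option maxHeartbeats 1600000

/-- The multi-ratio of six complex numbers. -/
noncomputable def multiRatio (w₁ w₂ w₃ w₄ w₅ w₆ : ℂ) : ℂ :=
  ((w₁ - w₂) * (w₃ - w₄) * (w₅ - w₆)) / ((w₂ - w₃) * (w₄ - w₅) * (w₆ - w₁))

/-- Inversion (reflection) of a point `P` in the circle of center `c` and radius `r`. -/
noncomputable def circleInversion (c : ℂ) (r : ℝ) (P : ℂ) : ℂ :=
  c + (r : ℂ) ^ 2 * (P - c) / (Complex.normSq (P - c) : ℂ)

private lemma abs_to_conj {w c : ℂ} {r : ℝ} (h : ‖w - c‖ = r) :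
    (w - c) * ((starRingEnd ℂ) w - (starRingEnd ℂ) c) = (r : ℂ) ^ 2 := by
  rw [← map_sub, Complex.mul_conj, ← Complex.sq_norm, h]
  push_cast; ring

/-- Key formula for the inversion point. -/
private lemma inv_key {c P : ℂ} {r : ℝ} (hP : P ≠ c) :
    (circleInversion c r P - c) * ((starRingEnd ℂ) P - (starRingEnd ℂ) c) = (r : ℂ) ^ 2 := by
  have h1 : P - c ≠ 0 := sub_ne_zero.mpr hP
  have h2 : ((Complex.normSq (P - c) : ℝ) : ℂ)
      = (P - c) * ((starRingEnd ℂ) P - (starRingEnd ℂ) c) := by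
    rw [← Complex.mul_conj, map_sub]
  have h3 : (starRingEnd ℂ) P - (starRingEnd ℂ) c ≠ 0 :=
    sub_ne_zero.mpr fun hh => hP (star_injective hh)
  rw [circleInversion, h2]
  field_simp
  ring

/-- Key formula for the second intersection point of two circles through `w₀`. -/
private lemma sec_key {c c' w₀ w : ℂ} {r r' : ℝ}
    (h0 : (w₀ - c) * ((starRingEnd ℂ) w₀ - (starRingEnd ℂ) c) = (r : ℂ) ^ 2)
    (h0' : (w₀ - c') * ((starRingEnd ℂ) w₀ - (starRingEnd ℂ) c') = (r' : ℂ) ^ 2)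
    (h : (w - c) * ((starRingEnd ℂ) w - (starRingEnd ℂ) c) = (r : ℂ) ^ 2)
    (h' : (w - c') * ((starRingEnd ℂ) w - (starRingEnd ℂ) c') = (r' : ℂ) ^ 2)
    (hw : w ≠ w₀) :
    (w - c) * ((starRingEnd ℂ) c' - (starRingEnd ℂ) c)
      = ((starRingEnd ℂ) w₀ - (starRingEnd ℂ) c) * (c' - c) := by
  set v := (starRingEnd ℂ) w
  set u := (starRingEnd ℂ) w₀
  set b := (starRingEnd ℂ) c
  set b' := (starRingEnd ℂ) c'
  have h1 : (c' - c) * (v - u) = (b - b') * (w - w₀) := by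
    linear_combination h - h' - h0 + h0'
  have h2 : (w - w₀) * (u - b) = (c - w) * (v - u) := by
    linear_combination h - h0
  have hd : w - w₀ ≠ 0 := sub_ne_zero.mpr hw
  have hmul : ((w - c) * (b' - b) - (u - b) * (c' - c)) * (w - w₀) = 0 := by
    linear_combination (w - c) * h1 - (c' - c) * h2
  rcases mul_eq_zero.mp hmul with hz | hz
  · linear_combination hz
  · exact absurd hz hd

theorem multiRatio_of_inversions_eq_neg_one
    (c₁ c₃ c₅ : ℂ) (r₁ r₃ r₅ : ℝ)
    (hr₁ : 0 < r₁) (hr₃ : 0 < r₃) (hr₅ : 0 < r₅)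
    (hne₁₃ : (c₁, r₁) ≠ (c₃, r₃)) (hne₃₅ : (c₃, r₃) ≠ (c₅, r₅))
    (hne₅₁ : (c₅, r₅) ≠ (c₁, r₁))
    (w₀ : ℂ)
    (hw₀₁ : ‖w₀ - c₁‖ = r₁)
    (hw₀₃ : ‖w₀ - c₃‖ = r₃)
    (hw₀₅ : ‖w₀ - c₅‖ = r₅)
    (w₂ w₄ w₆ : ℂ)
    (hw₂₁ : ‖w₂ - c₁‖ = r₁) (hw₂₃ : ‖w₂ - c₃‖ = r₃)
    (hw₂₀ : w₂ ≠ w₀)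
    (hw₄₃ : ‖w₄ - c₃‖ = r₃) (hw₄₅ : ‖w₄ - c₅‖ = r₅)
    (hw₄₀ : w₄ ≠ w₀)
    (hw₆₅ : ‖w₆ - c₅‖ = r₅) (hw₆₁ : ‖w₆ - c₁‖ = r₁)
    (hw₆₀ : w₆ ≠ w₀)
    (P : ℂ) (hP₁ : P ≠ c₁) (hP₃ : P ≠ c₃) (hP₅ : P ≠ c₅)
    (w₁ w₃ w₅ : ℂ)
    (hw₁ : w₁ = circleInversion c₁ r₁ P)
    (hw₃ : w₃ = circleInversion c₃ r₃ P)
    (hw₅ : w₅ = circleInversion c₅ r₅ P)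
    (h23 : w₂ ≠ w₃) (h45 : w₄ ≠ w₅) (h61 : w₆ ≠ w₁) :
    multiRatio w₁ w₂ w₃ w₄ w₅ w₆ = -1 := by
  have hc : ∀ c c' : ℂ, ∀ r r' : ℝ, ‖w₀ - c‖ = r → ‖w₀ - c'‖ = r' →
      (c, r) ≠ (c', r') → c ≠ c' := by
    intro c c' r r' h h' hne heq
    exact hne (by rw [heq] at h ⊢; rw [Prod.mk.injEq]; exact ⟨rfl, h ▸ h' ▸ rfl⟩)
  have hc₁₃ : c₁ ≠ c₃ := hc _ _ _ _ hw₀₁ hw₀₃ hne₁₃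
  have hc₃₅ : c₃ ≠ c₅ := hc _ _ _ _ hw₀₃ hw₀₅ hne₃₅
  have hc₅₁ : c₅ ≠ c₁ := hc _ _ _ _ hw₀₅ hw₀₁ hne₅₁
  set u : ℂ := (starRingEnd ℂ) w₀ with hu
  set q : ℂ := (starRingEnd ℂ) P with hq
  set b₁ : ℂ := (starRingEnd ℂ) c₁ with hbd₁
  set b₃ : ℂ := (starRingEnd ℂ) c₃ with hbd₃
  set b₅ : ℂ := (starRingEnd ℂ) c₅ with hbd₅
  have hb₁₃ : b₃ - b₁ ≠ 0 := sub_ne_zero.mpr fun h => hc₁₃ (star_injective h).symm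
  have hb₃₅ : b₅ - b₃ ≠ 0 := sub_ne_zero.mpr fun h => hc₃₅ (star_injective h).symm
  have hb₅₁ : b₁ - b₅ ≠ 0 := sub_ne_zero.mpr fun h => hc₅₁ (star_injective h).symm
  have hq₁ : q - b₁ ≠ 0 := sub_ne_zero.mpr fun h => hP₁ (star_injective h)
  have hq₃ : q - b₃ ≠ 0 := sub_ne_zero.mpr fun h => hP₃ (star_injective h)
  have hq₅ : q - b₅ ≠ 0 := sub_ne_zero.mpr fun h => hP₅ (star_injective h)
  -- circle equations for w₀
  have e₀₁ : (w₀ - c₁) * (u - b₁) = (r₁ : ℂ) ^ 2 := abs_to_conj hw₀₁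
  have e₀₃ : (w₀ - c₃) * (u - b₃) = (r₃ : ℂ) ^ 2 := abs_to_conj hw₀₃
  have e₀₅ : (w₀ - c₅) * (u - b₅) = (r₅ : ℂ) ^ 2 := abs_to_conj hw₀₅
  -- odd points
  have k₁ : (w₁ - c₁) * (q - b₁) = (w₀ - c₁) * (u - b₁) := by
    rw [hw₁]; exact (inv_key hP₁).trans e₀₁.symm
  have k₃ : (w₃ - c₃) * (q - b₃) = (w₀ - c₃) * (u - b₃) := by
    rw [hw₃]; exact (inv_key hP₃).trans e₀₃.symm
  have k₅ : (w₅ - c₅) * (q - b₅) = (w₀ - c₅) * (u - b₅) := by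
    rw [hw₅]; exact (inv_key hP₅).trans e₀₅.symm
  -- even points
  have k₂ : (w₂ - c₁) * (b₃ - b₁) = (u - b₁) * (c₃ - c₁) :=
    sec_key e₀₁ e₀₃ (abs_to_conj hw₂₁) (abs_to_conj hw₂₃) hw₂₀
  have k₄ : (w₄ - c₃) * (b₅ - b₃) = (u - b₃) * (c₅ - c₃) :=
    sec_key e₀₃ e₀₅ (abs_to_conj hw₄₃) (abs_to_conj hw₄₅) hw₄₀
  have k₆ : (w₆ - c₅) * (b₁ - b₅) = (u - b₅) * (c₁ - c₅) :=
    sec_key e₀₅ e₀₁ (abs_to_conj hw₆₅) (abs_to_conj hw₆₁) hw₆₀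
  -- factored forms of the six differences
  have d₁₂ : (w₁ - w₂) * ((q - b₁) * (b₃ - b₁))
      = (u - b₁) * ((w₀ - c₁) * (b₃ - b₁) - (c₃ - c₁) * (q - b₁)) := by
    linear_combination (b₃ - b₁) * k₁ - (q - b₁) * k₂
  have d₃₄ : (w₃ - w₄) * ((q - b₃) * (b₅ - b₃))
      = (u - b₃) * ((w₀ - c₃) * (b₅ - b₃) - (c₅ - c₃) * (q - b₃)) := by
    linear_combination (b₅ - b₃) * k₃ - (q - b₃) * k₄
  have d₅₆ : (w₅ - w₆) * ((q - b₅) * (b₁ - b₅))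
      = (u - b₅) * ((w₀ - c₅) * (b₁ - b₅) - (c₁ - c₅) * (q - b₅)) := by
    linear_combination (b₁ - b₅) * k₅ - (q - b₅) * k₆
  have d₂₃ : (w₂ - w₃) * ((b₃ - b₁) * (q - b₃))
      = (u - b₃) * ((w₀ - c₃) * (b₁ - b₃) - (c₁ - c₃) * (q - b₃)) := by
    linear_combination (q - b₃) * k₂ - (b₃ - b₁) * k₃
  have d₄₅ : (w₄ - w₅) * ((b₅ - b₃) * (q - b₅))
      = (u - b₅) * ((w₀ - c₅) * (b₃ - b₅) - (c₃ - c₅) * (q - b₅)) := by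
    linear_combination (q - b₅) * k₄ - (b₅ - b₃) * k₅
  have d₆₁ : (w₆ - w₁) * ((b₁ - b₅) * (q - b₁))
      = (u - b₁) * ((w₀ - c₁) * (b₅ - b₁) - (c₅ - c₁) * (q - b₁)) := by
    linear_combination (q - b₁) * k₆ - (b₁ - b₅) * k₁
  have hden : (w₂ - w₃) * (w₄ - w₅) * (w₆ - w₁) ≠ 0 :=
    mul_ne_zero (mul_ne_zero (sub_ne_zero.mpr h23) (sub_ne_zero.mpr h45)) (sub_ne_zero.mpr h61)
  rw [multiRatio, div_eq_iff hden]
  have hD : ((q - b₁) * (b₃ - b₁)) * ((q - b₃) * (b₅ - b₃)) * ((q - b₅) * (b₁ - b₅)) ≠ 0 :=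
    mul_ne_zero (mul_ne_zero (mul_ne_zero hq₁ hb₁₃) (mul_ne_zero hq₃ hb₃₅))
      (mul_ne_zero hq₅ hb₅₁)
  apply mul_right_cancel₀ hD
  calc (w₁ - w₂) * (w₃ - w₄) * (w₅ - w₆)
        * (((q - b₁) * (b₃ - b₁)) * ((q - b₃) * (b₅ - b₃)) * ((q - b₅) * (b₁ - b₅)))
      = ((w₁ - w₂) * ((q - b₁) * (b₃ - b₁))) * ((w₃ - w₄) * ((q - b₃) * (b₅ - b₃)))
        * ((w₅ - w₆) * ((q - b₅) * (b₁ - b₅))) := by ring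
    _ = ((u - b₁) * ((w₀ - c₁) * (b₃ - b₁) - (c₃ - c₁) * (q - b₁)))
        * ((u - b₃) * ((w₀ - c₃) * (b₅ - b₃) - (c₅ - c₃) * (q - b₃)))
        * ((u - b₅) * ((w₀ - c₅) * (b₁ - b₅) - (c₁ - c₅) * (q - b₅))) := by
        rw [d₁₂, d₃₄, d₅₆]
    _ = -(((u - b₃) * ((w₀ - c₃) * (b₁ - b₃) - (c₁ - c₃) * (q - b₃)))
        * ((u - b₅) * ((w₀ - c₅) * (b₃ - b₅) - (c₃ - c₅) * (q - b₅)))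
        * ((u - b₁) * ((w₀ - c₁) * (b₅ - b₁) - (c₅ - c₁) * (q - b₁)))) := by ring
    _ = -(((w₂ - w₃) * ((b₃ - b₁) * (q - b₃))) * ((w₄ - w₅) * ((b₅ - b₃) * (q - b₅)))
        * ((w₆ - w₁) * ((b₁ - b₅) * (q - b₁)))) := by rw [d₂₃, d₄₅, d₆₁]
    _ = -((w₂ - w₃) * (w₄ - w₅) * (w₆ - w₁))
        * (((q - b₁) * (b₃ - b₁)) * ((q - b₃) * (b₅ - b₃)) * ((q - b₅) * (b₁ - b₅))) := by
        ring
    _ = -1 * ((w₂ - w₃) * (w₄ - w₅) * (w₆ - w₁))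
        * (((q - b₁) * (b₃ - b₁)) * ((q - b₃) * (b₅ - b₃)) * ((q - b₅) * (b₁ - b₅))) := by
        ring
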